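/- For every positive integer n, (1/2)·L(n)·T(2n) < e·(n!)^(1/n) < (1/2)·R(n)·T(2n). (This is an equivalent formulation of Robbins's improvement of Stirling's approximation √(2π)·n^(n+1/2)·e^(−n)·e^(1/(12n+1)) < n! < √(2π)·n^(n+1/2)·e^(−n)·e^(1/(12n)).) -/

import Mathlib

open Real Filter Nat

noncomputable def L (x : ℝ) : ℝ := Real.pi ^ (1 / (2 * x)) * Real.exp (1 / ((12 * x + 1) * x))

noncomputable def R (x : ℝ) : ℝ := Real.pi ^ (1 / (2 * x)) * Real.exp (1 / (12 * x ^ 2))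

noncomputable def T (x : ℝ) : ℝ := x * x ^ (1 / x)

open Topology


lemma log_ratio_lower {t : ℝ} (ht0 : 0 < t) (ht1 : t < 1) :
    2*t + 2/3*t^3 < Real.log (1+t) - Real.log (1-t) := by
  set f : ℝ → ℝ := fun x => Real.log (1+x) - Real.log (1-x) - (2*x + 2/3*x^3) with hf
  have key : StrictMonoOn f (Set.Icc 0 t) := by
    apply strictMonoOn_of_deriv_pos (convex_Icc 0 t)
    · apply ContinuousOn.sub
      apply ContinuousOn.sub
      · exact (continuousOn_const.add continuousOn_id).log (by
          intro x hx; simp only [Set.mem_Icc] at hx; intro h; simp only [Pi.add_apply, Pi.sub_apply, id_eq] at h; nlinarith [hx.1])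
      · exact (continuousOn_const.sub continuousOn_id).log (by
          intro x hx; simp only [Set.mem_Icc] at hx; intro h; simp only [Pi.add_apply, Pi.sub_apply, id_eq] at h; nlinarith [hx.2])
      · exact (continuousOn_const.mul continuousOn_id).add
          (continuousOn_const.mul (continuousOn_id.pow 3))
    · intro x hx
      rw [interior_Icc] at hx
      obtain ⟨hx0, hxt⟩ := hx
      have h1 : (0:ℝ) < 1 + x := by linarith
      have h2 : (0:ℝ) < 1 - x := by linarith
      have hla : HasDerivAt (fun y : ℝ => Real.log (1+y)) (1/(1+x)) x := by
        have ha : HasDerivAt (fun y : ℝ => 1 + y) 1 x := by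
          simpa using (hasDerivAt_id x).const_add 1
        simpa [Function.comp_def] using (Real.hasDerivAt_log h1.ne').comp x ha
      have hlb : HasDerivAt (fun y : ℝ => Real.log (1-y)) (-(1/(1-x))) x := by
        have hb : HasDerivAt (fun y : ℝ => 1 - y) (-1) x := by
          simpa using (hasDerivAt_id x).const_sub 1
        have := (Real.hasDerivAt_log h2.ne').comp x hb
        simpa [Function.comp_def] using this
      have hp : HasDerivAt (fun y : ℝ => 2*y + 2/3*y^3) (2 + 2*x^2) x := by
        have := ((hasDerivAt_pow 3 x).const_mul (2/3:ℝ)).const_add 0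
        have h' := ((hasDerivAt_id x).const_mul (2:ℝ)).add ((hasDerivAt_pow 3 x).const_mul (2/3:ℝ))
        convert h' using 1
        · rfl
        · rfl
        · funext y; simp
        · norm_num; ring
      have hder : HasDerivAt f (1/(1+x) - (-(1/(1-x))) - (2 + 2*x^2)) x :=
        (hla.sub hlb).sub hp
      rw [hder.deriv]
      have heq : 1/(1+x) - (-(1/(1-x))) - (2 + 2*x^2) = 2*x^4/((1+x)*(1-x)) := by
        field_simp
        ring
      rw [heq]
      positivity
  have h0 : f 0 = 0 := by simp [hf]
  have := key (Set.left_mem_Icc.2 ht0.le) (Set.right_mem_Icc.2 ht0.le) ht0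
  rw [h0] at this
  simp only [hf] at this
  linarith

lemma log_ratio_upper {t : ℝ} (ht0 : 0 < t) (ht1 : t < 1) :
    Real.log (1+t) - Real.log (1-t) < 2*t + 2/3*t^3/(1-t^2) := by
  set f : ℝ → ℝ := fun x => (2*x + 2/3*x^3/(1-x^2)) - (Real.log (1+x) - Real.log (1-x)) with hf
  have key : StrictMonoOn f (Set.Icc 0 t) := by
    apply strictMonoOn_of_deriv_pos (convex_Icc 0 t)
    · apply ContinuousOn.sub
      · apply ContinuousOn.add (continuousOn_const.mul continuousOn_id)
        apply ContinuousOn.div (continuousOn_const.mul (continuousOn_id.pow 3))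
          (continuousOn_const.sub (continuousOn_id.pow 2))
        intro x hx h; simp only [Set.mem_Icc] at hx; simp only [Pi.sub_apply, Pi.pow_apply, id_eq] at h; nlinarith [hx.1, hx.2]
      · apply ContinuousOn.sub
        · exact (continuousOn_const.add continuousOn_id).log (by
            intro x hx; simp only [Set.mem_Icc] at hx; intro h; simp only [Pi.add_apply, Pi.sub_apply, id_eq] at h; nlinarith [hx.1])
        · exact (continuousOn_const.sub continuousOn_id).log (by
            intro x hx; simp only [Set.mem_Icc] at hx; intro h; simp only [Pi.add_apply, Pi.sub_apply, id_eq] at h; nlinarith [hx.2])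
    · intro x hx
      rw [interior_Icc] at hx
      obtain ⟨hx0, hxt⟩ := hx
      have h1 : (0:ℝ) < 1 + x := by linarith
      have h2 : (0:ℝ) < 1 - x := by linarith
      have h3 : (0:ℝ) < 1 - x^2 := by nlinarith
      have hla : HasDerivAt (fun y : ℝ => Real.log (1+y)) (1/(1+x)) x := by
        have ha : HasDerivAt (fun y : ℝ => 1 + y) 1 x := by
          simpa using (hasDerivAt_id x).const_add 1
        simpa [Function.comp_def] using (Real.hasDerivAt_log h1.ne').comp x ha
      have hlb : HasDerivAt (fun y : ℝ => Real.log (1-y)) (-(1/(1-x))) x := by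
        have hb : HasDerivAt (fun y : ℝ => 1 - y) (-1) x := by
          simpa using (hasDerivAt_id x).const_sub 1
        have := (Real.hasDerivAt_log h2.ne').comp x hb
        simpa [Function.comp_def] using this
      have hq : HasDerivAt (fun y : ℝ => 2/3*y^3/(1-y^2))
          ((2/3*(3*x^2)*(1-x^2) - 2/3*x^3*(-(2*x)))/(1-x^2)^2) x := by
        have hu : HasDerivAt (fun y : ℝ => 2/3*y^3) (2/3*(3*x^2)) x := by
          simpa using (hasDerivAt_pow 3 x).const_mul (2/3:ℝ)
        have hv : HasDerivAt (fun y : ℝ => 1 - y^2) (-(2*x)) x := by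
          have := (hasDerivAt_pow 2 x).const_sub 1
          simpa using this
        exact hu.div hv h3.ne'
      have hp : HasDerivAt (fun y : ℝ => 2*y + 2/3*y^3/(1-y^2))
          (2 + (2/3*(3*x^2)*(1-x^2) - 2/3*x^3*(-(2*x)))/(1-x^2)^2) x := by
        have := ((hasDerivAt_id x).const_mul (2:ℝ)).add hq
        simpa [Pi.add_def] using this
      have hder : HasDerivAt f
          ((2 + (2/3*(3*x^2)*(1-x^2) - 2/3*x^3*(-(2*x)))/(1-x^2)^2) - (1/(1+x) - (-(1/(1-x))))) x :=
        hp.sub (hla.sub hlb)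
      rw [hder.deriv]
      have heq : (2 + (2/3*(3*x^2)*(1-x^2) - 2/3*x^3*(-(2*x)))/(1-x^2)^2) - (1/(1+x) - (-(1/(1-x))))
          = 4/3*x^4/(1-x^2)^2 := by
        have h1x : (1+x) ≠ 0 := h1.ne'
        have h2x : (1-x) ≠ 0 := h2.ne'
        have h3x : (1-x^2) ≠ 0 := h3.ne'
        field_simp
        ring
      rw [heq]
      positivity
  have h0 : f 0 = 0 := by simp [hf]
  have := key (Set.left_mem_Icc.2 ht0.le) (Set.right_mem_Icc.2 ht0.le) ht0
  rw [h0] at this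
  simp only [hf] at this
  linarith


noncomputable def Dd (n : ℕ) : ℝ :=
  Real.log (n !) - ((n:ℝ) + 1/2) * Real.log n + n - (1/2) * Real.log (2*π)

lemma D_step (n : ℕ) (hn : 1 ≤ n) :
    Dd n - Dd (n+1) = ((n:ℝ) + 1/2) * (Real.log ((n:ℝ)+1) - Real.log n) - 1 := by
  have hN : (1:ℝ) ≤ (n:ℝ) := by exact_mod_cast hn
  have hn0 : ((n:ℝ)) ≠ 0 := by linarith
  have hn1 : ((n:ℝ)+1) ≠ 0 := by linarith
  have hfact : ((n !:ℕ):ℝ) ≠ 0 := by positivity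
  have hlog : Real.log ((n+1)!) = Real.log ((n:ℝ)+1) + Real.log (n !) := by
    rw [Nat.factorial_succ]
    push_cast
    rw [Real.log_mul hn1 hfact]
  simp only [Dd, hlog]
  push_cast
  ring

lemma step_est (N : ℝ) (hN : 1 ≤ N) :
    (1/(12*N+1) - 1/(12*N+13) < (N + 1/2) * (Real.log (N+1) - Real.log N) - 1) ∧
    ((N + 1/2) * (Real.log (N+1) - Real.log N) - 1 < 1/(12*N) - 1/(12*N+12)) := by
  have h2N : (0:ℝ) < 2*N+1 := by linarith
  obtain ⟨t, htdef⟩ : ∃ t : ℝ, t = 1/(2*N+1) := ⟨_, rfl⟩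
  have ht0 : 0 < t := by rw [htdef]; positivity
  have ht1 : t < 1 := by rw [htdef, div_lt_one h2N]; linarith
  have hlogid : Real.log ((N:ℝ)+1) - Real.log N = Real.log (1+t) - Real.log (1-t) := by
    have e1 : 1 + t = (N+1) * (2/(2*N+1)) := by rw [htdef]; field_simp; ring
    have e2 : 1 - t = N * (2/(2*N+1)) := by rw [htdef]; field_simp; ring
    rw [e1, e2, Real.log_mul (by linarith) (by positivity), Real.log_mul (by linarith) (by positivity)]
    ring
  rw [hlogid]
  have hlow := log_ratio_lower ht0 ht1
  have hup := log_ratio_upper ht0 ht1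
  have hpos : (0:ℝ) < N + 1/2 := by linarith
  have h1t2 : 1 - t^2 = (4*N^2+4*N)/(2*N+1)^2 := by rw [htdef]; field_simp; ring
  have hNpos : (0:ℝ) < N := by linarith
  have h4 : (4*N^2+4*N:ℝ) ≠ 0 := by nlinarith
  constructor
  · have e4 : (N+1/2) * (2*t + 2/3*t^3) - 1 = 1/(3*(2*N+1)^2) := by
      rw [htdef]; field_simp; ring
    have h1 : (N+1/2) * (2*t + 2/3*t^3) - 1 < (N+1/2) * (Real.log (1+t) - Real.log (1-t)) - 1 := by
      have := mul_lt_mul_of_pos_left hlow hpos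
      linarith
    have h2 : 1/(12*N+1) - 1/(12*N+13) < 1/(3*(2*N+1)^2) := by
      rw [div_sub_div _ _ (by linarith : (12*N+1:ℝ) ≠ 0) (by linarith : (12*N+13:ℝ) ≠ 0),
        div_lt_div_iff₀ (by nlinarith) (by positivity)]
      nlinarith
    linarith [e4 ▸ h1]
  · have e6 : 2/3*t^3/(1-t^2) = 2*(2*N+1)^2/(3*(2*N+1)^3*(4*N^2+4*N)) := by
      rw [h1t2, htdef]
      field_simp
    have e3 : (N+1/2) * (2*t + 2/3*t^3/(1-t^2)) - 1 = 1/(12*N*(N+1)) := by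
      rw [e6, htdef]
      field_simp
      ring
    have h1 : (N+1/2) * (Real.log (1+t) - Real.log (1-t)) - 1
        < (N+1/2) * (2*t + 2/3*t^3/(1-t^2)) - 1 := by
      have := mul_lt_mul_of_pos_left hup hpos
      linarith
    have e5 : 1/(12*N*(N+1)) = 1/(12*N) - 1/(12*N+12) := by
      field_simp
      ring
    linarith [e3 ▸ h1]

lemma D_step_bounds (n : ℕ) (hn : 1 ≤ n) :
    (1/(12*(n:ℝ)+1) - 1/(12*(n:ℝ)+13) < Dd n - Dd (n+1)) ∧
    (Dd n - Dd (n+1) < 1/(12*(n:ℝ)) - 1/(12*(n:ℝ)+12)) := by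
  have hN : (1:ℝ) ≤ (n:ℝ) := by exact_mod_cast hn
  have := step_est (n:ℝ) hN
  rw [← D_step n hn] at this
  exact this

lemma D_tendsto : Tendsto Dd atTop (𝓝 0) := by
  have hs := Stirling.tendsto_stirlingSeq_sqrt_pi
  have hsp : (0:ℝ) < Real.sqrt π := Real.sqrt_pos.2 Real.pi_pos
  have hlog : Tendsto (fun n => Real.log (Stirling.stirlingSeq n) - Real.log (Real.sqrt π))
      atTop (𝓝 0) := by
    have h1 : Tendsto (fun n => Real.log (Stirling.stirlingSeq n)) atTop (𝓝 (Real.log (Real.sqrt π))) :=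
      ((Real.continuousAt_log hsp.ne').tendsto).comp hs
    have h2 := h1.sub (tendsto_const_nhds (x := Real.log (Real.sqrt π)) (f := atTop))
    simpa using h2
  apply hlog.congr'
  filter_upwards [eventually_ge_atTop 1] with n hn
  have hN : (1:ℝ) ≤ (n:ℝ) := by exact_mod_cast hn
  have hn0 : (0:ℝ) < (n:ℝ) := by linarith
  have hfact : (0:ℝ) < ((n !:ℕ):ℝ) := by positivity
  have h2n : (0:ℝ) < 2*(n:ℝ) := by linarith
  have hsq : (0:ℝ) < Real.sqrt (2*(n:ℝ)) := Real.sqrt_pos.2 h2n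
  have hpow : (0:ℝ) < ((n:ℝ)/Real.exp 1)^n := by positivity
  rw [Stirling.stirlingSeq]
  rw [Real.log_div hfact.ne' (by positivity), Real.log_mul hsq.ne' hpow.ne',
    Real.log_sqrt h2n.le, Real.log_pow, Real.log_div hn0.ne' (Real.exp_pos 1).ne',
    Real.log_exp, Real.log_sqrt Real.pi_pos.le,
    Real.log_mul (two_ne_zero) hn0.ne', Dd, Real.log_mul (two_ne_zero) Real.pi_pos.ne']
  push_cast
  ring

lemma tendsto_inv_lin (c : ℝ) :
    Tendsto (fun n : ℕ => 1/(12*(n:ℝ)+c)) atTop (𝓝 0) := by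
  apply Tendsto.div_atTop (tendsto_const_nhds)
  apply tendsto_atTop_add_const_right
  exact (tendsto_natCast_atTop_atTop).const_mul_atTop (by norm_num)

lemma D_bounds (n : ℕ) (hn : 1 ≤ n) :
    1/(12*(n:ℝ)+1) < Dd n ∧ Dd n < 1/(12*(n:ℝ)) := by
  constructor
  · set b : ℕ → ℝ := fun k => Dd k - 1/(12*(k:ℝ)+1) with hb
    have hblim : Tendsto b atTop (𝓝 0) := by
      have := D_tendsto.sub (tendsto_inv_lin 1)
      simp only [hb]
      simpa using this
    have hbstep : ∀ k, 1 ≤ k → b (k+1) < b k := by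
      intro k hk
      have h := (D_step_bounds k hk).1
      have heq : 12*((k:ℝ)+1)+1 = 12*(k:ℝ)+13 := by ring
      simp only [hb]
      push_cast
      rw [heq]
      linarith
    have hmono : ∀ m, n + 1 ≤ m → b m ≤ b (n+1) := by
      intro m hm
      induction m, hm using Nat.le_induction with
      | base => exact le_rfl
      | succ m hm ih =>
        have := hbstep m (by omega)
        linarith
    have h1 : 0 ≤ b (n+1) := by
      apply le_of_tendsto hblim
      exact eventually_atTop.2 ⟨n+1, hmono⟩
    have h2 : b (n+1) < b n := hbstep n hn
    have : 0 < b n := lt_of_le_of_lt h1 h2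
    simp only [hb] at this
    linarith
  · set a : ℕ → ℝ := fun k => Dd k - 1/(12*(k:ℝ)) with ha
    have halim : Tendsto a atTop (𝓝 0) := by
      have := D_tendsto.sub (tendsto_inv_lin 0)
      simp only [add_zero] at this
      simp only [ha]
      simpa using this
    have hastep : ∀ k, 1 ≤ k → a k < a (k+1) := by
      intro k hk
      have h := (D_step_bounds k hk).2
      have heq : 12*((k:ℝ)+1) = 12*(k:ℝ)+12 := by ring
      simp only [ha]
      push_cast
      rw [heq]
      linarith
    have hmono : ∀ m, n + 1 ≤ m → a (n+1) ≤ a m := by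
      intro m hm
      induction m, hm using Nat.le_induction with
      | base => exact le_rfl
      | succ m hm ih =>
        have := hastep m (by omega)
        linarith
    have h1 : a (n+1) ≤ 0 := by
      apply ge_of_tendsto halim
      exact eventually_atTop.2 ⟨n+1, hmono⟩
    have h2 : a n < a (n+1) := hastep n hn
    have : a n < 0 := lt_of_lt_of_le h2 h1
    simp only [ha] at this
    linarith

/-- Robbins's improvement of Stirling's approximation, reformulated:
`(1/2)·L(n)·T(2n) < e·(n!)^(1/n) < (1/2)·R(n)·T(2n)` for all `n ≥ 1`. -/
theorem robbins_reformulated (n : ℕ) (hn : 1 ≤ n) :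
    (1 / 2) * L n * T (2 * n) < Real.exp 1 * (n ! : ℝ) ^ (1 / (n : ℝ)) ∧
    Real.exp 1 * (n ! : ℝ) ^ (1 / (n : ℝ)) < (1 / 2) * R n * T (2 * n) := by
  have hN : (1:ℝ) ≤ (n:ℝ) := by exact_mod_cast hn
  have hNpos : (0:ℝ) < (n:ℝ) := by linarith
  have hfact : (0:ℝ) < ((n !:ℕ):ℝ) := by positivity
  have h2n : (0:ℝ) < 2*(n:ℝ) := by linarith
  have hLpos : 0 < L (n:ℝ) := by
    unfold L; positivity
  have hRpos : 0 < R (n:ℝ) := by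
    unfold R; positivity
  have hTpos : 0 < T (2*(n:ℝ)) := by
    unfold T; positivity
  have hLHS : (0:ℝ) < (1/2) * L (n:ℝ) * T (2*(n:ℝ)) := by positivity
  have hRHS2 : (0:ℝ) < (1/2) * R (n:ℝ) * T (2*(n:ℝ)) := by positivity
  have hMID : (0:ℝ) < Real.exp 1 * ((n !:ℕ):ℝ) ^ (1/(n:ℝ)) := by positivity
  -- log computations
  have hlogT : Real.log (T (2*(n:ℝ))) = Real.log (2*(n:ℝ)) + (1/(2*(n:ℝ))) * Real.log (2*(n:ℝ)) := by
    unfold T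
    rw [Real.log_mul h2n.ne' (by positivity : ((2*(n:ℝ)) ^ (1/(2*(n:ℝ)))) ≠ 0),
      Real.log_rpow h2n]
  have hlogL : Real.log (L (n:ℝ)) = (1/(2*(n:ℝ))) * Real.log π + 1/((12*(n:ℝ)+1)*(n:ℝ)) := by
    unfold L
    rw [Real.log_mul (by positivity) (Real.exp_pos _).ne', Real.log_rpow Real.pi_pos, Real.log_exp]
  have hlogR : Real.log (R (n:ℝ)) = (1/(2*(n:ℝ))) * Real.log π + 1/(12*(n:ℝ)^2) := by
    unfold R
    rw [Real.log_mul (by positivity) (Real.exp_pos _).ne', Real.log_rpow Real.pi_pos, Real.log_exp]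
  have hlogMID : Real.log (Real.exp 1 * ((n !:ℕ):ℝ) ^ (1/(n:ℝ)))
      = 1 + (1/(n:ℝ)) * Real.log (n !) := by
    rw [Real.log_mul (Real.exp_pos _).ne' (by positivity), Real.log_exp,
      Real.log_rpow hfact]
  have hD := D_bounds n hn
  simp only [Dd] at hD
  have hlog2n : Real.log (2*(n:ℝ)) = Real.log 2 + Real.log (n:ℝ) :=
    Real.log_mul two_ne_zero hNpos.ne'
  have hlog2pi : Real.log (2*π) = Real.log 2 + Real.log π :=
    Real.log_mul two_ne_zero Real.pi_pos.ne'
  rw [hlog2pi] at hD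
  have hloghalf : Real.log (1/2 : ℝ) = -Real.log 2 := by
    rw [one_div, Real.log_inv]
  constructor
  · rw [← Real.log_lt_log_iff hLHS hMID,
      Real.log_mul (by positivity : ((1:ℝ)/2 * L (n:ℝ)) ≠ 0) hTpos.ne',
      Real.log_mul (by norm_num : ((1:ℝ)/2) ≠ 0) hLpos.ne',
      hlogT, hlogL, hlogMID, hloghalf, hlog2n]
    have key := hD.1
    have hmul := mul_lt_mul_of_pos_left key (by positivity : (0:ℝ) < 1/(n:ℝ))
    have e1 : (1/(n:ℝ)) * (1/(12*(n:ℝ)+1)) = 1/((12*(n:ℝ)+1)*(n:ℝ)) := by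
      field_simp
    have e2 : (1/(n:ℝ)) * (Real.log (n !) - ((n:ℝ)+1/2) * Real.log (n:ℝ) + (n:ℝ)
        - 1/2 * (Real.log 2 + Real.log π))
        = (1/(n:ℝ)) * Real.log (n !) - Real.log (n:ℝ) - (1/(2*(n:ℝ))) * Real.log (n:ℝ) + 1
        - (1/(2*(n:ℝ))) * Real.log 2 - (1/(2*(n:ℝ))) * Real.log π := by
      field_simp
      ring
    rw [e1, e2] at hmul
    linarith
  · rw [← Real.log_lt_log_iff hMID hRHS2,
      Real.log_mul (by positivity : ((1:ℝ)/2 * R (n:ℝ)) ≠ 0) hTpos.ne',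
      Real.log_mul (by norm_num : ((1:ℝ)/2) ≠ 0) hRpos.ne',
      hlogT, hlogR, hlogMID, hloghalf, hlog2n]
    have key := hD.2
    have hmul := mul_lt_mul_of_pos_left key (by positivity : (0:ℝ) < 1/(n:ℝ))
    have e1 : (1/(n:ℝ)) * (1/(12*(n:ℝ))) = 1/(12*(n:ℝ)^2) := by
      field_simp
    have e2 : (1/(n:ℝ)) * (Real.log (n !) - ((n:ℝ)+1/2) * Real.log (n:ℝ) + (n:ℝ)
        - 1/2 * (Real.log 2 + Real.log π))
        = (1/(n:ℝ)) * Real.log (n !) - Real.log (n:ℝ) - (1/(2*(n:ℝ))) * Real.log (n:ℝ) + 1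
        - (1/(2*(n:ℝ))) * Real.log 2 - (1/(2*(n:ℝ))) * Real.log π := by
      field_simp
      ring
    rw [e1, e2] at hmul
    linarith
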